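/- Uniqueness of graph-independent joint distribution: let (A, φ) be a non-commutative probability space, Γ = (V,E) a graph, and {A_v}_{v ∈ V} a Γ-independent family of unital C*-subalgebras of A. Then the restriction of φ to the C*-algebra B generated by all the A_v is uniquely determined by the restrictions φ|_{A_v}. -/

import Mathlib

open scoped ComplexOrder

/-- One-step moves on words over the vertex set of a simplicial graph. -/
inductive WordStep {V : Type*} (G : SimpleGraph V) : List V → List V → Prop
  | del (l r : List V) (a : V) : WordStep G (l ++ a :: a :: r) (l ++ a :: r)
  | swap (l r : List V) (a b : V) (h : G.Adj a b) :
      WordStep G (l ++ a :: b :: r) (l ++ b :: a :: r)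

/-- The equivalence relation on words generated by the moves. -/
def WordEquiv {V : Type*} (G : SimpleGraph V) : List V → List V → Prop :=
  Relation.EqvGen (WordStep G)

/-- A word of vertices is reduced. -/
def IsReducedWord {V : Type*} (G : SimpleGraph V) (w : List V) : Prop :=
  ∀ k l : Fin w.length, (k : ℕ) < (l : ℕ) → w.get k = w.get l →
    ∃ p : Fin w.length, (k : ℕ) < (p : ℕ) ∧ (p : ℕ) < (l : ℕ) ∧ ¬ G.Adj (w.get k) (w.get p)

/-- Swapping two adjacent letters whose vertices are joined by an edge, for
words whose letters are elements of the vertex algebras. -/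
inductive LetterSwap {V : Type*} {A : V → Type*} (G : SimpleGraph V) :
    List (Σ v, A v) → List (Σ v, A v) → Prop
  | swap (l r : List (Σ v, A v)) (p q : Σ v, A v) (h : G.Adj p.1 q.1) :
      LetterSwap G (l ++ p :: q :: r) (l ++ q :: p :: r)

/-- Equivalent rearrangements of words of algebra letters. -/
def LetterEquiv {V : Type*} {A : V → Type*} (G : SimpleGraph V) :
    List (Σ v, A v) → List (Σ v, A v) → Prop :=
  Relation.EqvGen (LetterSwap G)

/-- The element of the graph product determined by a word of letters. -/
noncomputable def wordElem {V : Type*} {A : V → Type*} [∀ v, CStarAlgebra (A v)]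
    {P : Type*} [CStarAlgebra P] (ι : ∀ v, A v →⋆ₐ[ℂ] P)
    (w : List (Σ v, A v)) : P :=
  (w.map fun p => ι p.1 p.2).prod

/-- A word of letters is reduced (with respect to the states `φ`): its word of
vertices is reduced and every letter lies in the kernel of the corresponding
state. -/
def IsReducedAlgWord {V : Type*} {A : V → Type*} [∀ v, CStarAlgebra (A v)]
    (G : SimpleGraph V) (φ : ∀ v, A v →ₗ[ℂ] ℂ) (w : List (Σ v, A v)) : Prop :=
  IsReducedWord G (w.map Sigma.fst) ∧ ∀ p ∈ w, φ p.1 p.2 = 0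

/-- A finite set of words of letters is complete: it contains the unit (the
empty word) and is closed under left and right truncations of all equivalent
rearrangements of its members. -/
def IsCompleteSet {V : Type*} {A : V → Type*} (G : SimpleGraph V)
    (X : Finset (List (Σ v, A v))) : Prop :=
  ([] : List (Σ v, A v)) ∈ X ∧
    ∀ w ∈ X, ∀ w' : List (Σ v, A v), LetterEquiv G w w' →
      w'.tail ∈ X ∧ w'.dropLast ∈ X

/-- A family of unital C*-subalgebras `S v` of a non-commutative probability
space `(A, φ)` is `Γ`-independent: algebras at adjacent vertices commute, and
`φ` vanishes on every element `a₁ ⋯ a_m` reduced with respect to `φ`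
(each `a_j ∈ S v_j` with `φ(a_j) = 0` and `(v_1, …, v_m)` a reduced word). -/
def GammaIndep {V : Type*} (G : SimpleGraph V) {A : Type*} [CStarAlgebra A]
    (φ : A → ℂ) (S : V → StarSubalgebra ℂ A) : Prop :=
  (∀ v w, G.Adj v w → ∀ a ∈ S v, ∀ b ∈ S w, a * b = b * a) ∧
  ∀ l : List (V × A), IsReducedWord G (l.map Prod.fst) → l ≠ [] →
    (∀ p ∈ l, p.2 ∈ S p.1 ∧ φ p.2 = 0) →
    φ (l.map Prod.snd).prod = 0



open Classical in
theorem key_moment_eq {V : Type*} (G : SimpleGraph V) {A : Type*} [CStarAlgebra A]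
    (S : V → StarSubalgebra ℂ A) (φ ψ : A →L[ℂ] ℂ)
    (hφ1 : φ 1 = 1) (hψ1 : ψ 1 = 1)
    (hcomm : ∀ v w, G.Adj v w → ∀ a ∈ S v, ∀ b ∈ S w, a * b = b * a)
    (hφred : ∀ l : List (V × A), IsReducedWord G (l.map Prod.fst) → l ≠ [] →
      (∀ p ∈ l, p.2 ∈ S p.1 ∧ φ p.2 = 0) → φ (l.map Prod.snd).prod = 0)
    (hψred : ∀ l : List (V × A), IsReducedWord G (l.map Prod.fst) → l ≠ [] →
      (∀ p ∈ l, p.2 ∈ S p.1 ∧ ψ p.2 = 0) → ψ (l.map Prod.snd).prod = 0)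
    (hagree : ∀ v, ∀ a ∈ S v, φ a = ψ a) :
    ∀ m : ℕ, ∀ l : List (V × A),
      l.length + l.countP (fun p => !decide (φ p.2 = 0)) ≤ m →
      (∀ p ∈ l, p.2 ∈ S p.1) → φ (l.map Prod.snd).prod = ψ (l.map Prod.snd).prod := by
  intro m
  induction m with
  | zero =>
    intro l hl _
    have : l = [] := List.eq_nil_of_length_eq_zero (by omega)
    subst this; simp [hφ1, hψ1]
  | succ m IH =>
    intro l hlen hmem
    by_cases hcent : ∀ p ∈ l, φ p.2 = 0
    · -- all letters centered
      rcases eq_or_ne l [] with rfl | hne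
      · simp [hφ1, hψ1]
      have hcount : l.countP (fun p => !decide (φ p.2 = 0)) = 0 :=
        List.countP_eq_zero.mpr (by intro q hq; simp [hcent q hq])
      by_cases hred : IsReducedWord G (l.map Prod.fst)
      · rw [hφred l hred hne (fun p hp => ⟨hmem p hp, hcent p hp⟩),
          hψred l hred hne (fun p hp => ⟨hmem p hp, by
            rw [← hagree p.1 p.2 (hmem p hp)]; exact hcent p hp⟩)]
      · -- not reduced: rearrange and merge
        unfold IsReducedWord at hred
        push_neg at hred
        obtain ⟨k, j, hkj, heq, hadj⟩ := hred
        have hlw : (l.map Prod.fst).length = l.length := List.length_map _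
        have hji : (j : ℕ) < l.length := by rw [← hlw]; exact j.isLt
        have hki : (k : ℕ) < l.length := lt_trans hkj hji
        set u := l.take (k : ℕ) with hu
        set a := l[(k : ℕ)] with hadef
        set mid := (l.take (j : ℕ)).drop ((k : ℕ) + 1) with hmid
        set b := l[(j : ℕ)] with hbdef
        set t := l.drop ((j : ℕ) + 1) with ht
        have hlent : (l.take (j : ℕ)).length = (j : ℕ) := by
          rw [List.length_take]; omega
        have htakej : l.take (j : ℕ) = u ++ a :: mid := by
          have h1 : (l.take (j : ℕ)).take (k : ℕ) ++ (l.take (j : ℕ)).drop (k : ℕ)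
              = l.take (j : ℕ) := List.take_append_drop _ _
          have hk' : (k : ℕ) < (l.take (j : ℕ)).length := by omega
          have h2 : (l.take (j : ℕ)).drop (k : ℕ)
              = (l.take (j : ℕ))[(k : ℕ)] :: (l.take (j : ℕ)).drop ((k : ℕ) + 1) :=
            List.drop_eq_getElem_cons hk'
          have h3 : (l.take (j : ℕ))[(k : ℕ)]'hk' = l[(k : ℕ)] := List.getElem_take
          have h4 : (l.take (j : ℕ)).take (k : ℕ) = l.take (k : ℕ) := by
            rw [List.take_take]; congr 1; omega
          rw [← h1, h2, h3, h4]
        have hdj : List.drop (j : ℕ) l = b :: t := List.drop_eq_getElem_cons hji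
        have hlsplit : l = u ++ a :: (mid ++ b :: t) := by
          conv_lhs => rw [← List.take_append_drop (j : ℕ) l]
          rw [hdj, htakej]
          simp
        have hab1 : a.1 = b.1 := by
          have := heq
          simp only [List.get_eq_getElem, List.getElem_map] at this
          exact this
        have hmemu : ∀ q ∈ u, q.2 ∈ S q.1 := fun q hq =>
          hmem q (by rw [hlsplit]; simp [hq])
        have hmemmid : ∀ q ∈ mid, q ∈ l := fun q hq => by rw [hlsplit]; simp [hq]
        have hmemt : ∀ q ∈ t, q.2 ∈ S q.1 := fun q hq =>
          hmem q (by rw [hlsplit]; simp [hq])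
        have hamem : a ∈ l := by rw [hlsplit]; simp
        have hbmem : b ∈ l := by rw [hlsplit]; simp
        have hmidadj : ∀ q ∈ mid, G.Adj a.1 q.1 := by
          intro q hq
          obtain ⟨i, hi, hqe⟩ := List.mem_iff_getElem.mp hq
          have hmidlen : mid.length = (j : ℕ) - ((k : ℕ) + 1) := by
            rw [hmid, List.length_drop, hlent]
          have hplt : (k : ℕ) + 1 + i < l.length := by omega
          have hple : (k : ℕ) + 1 + i < (l.map Prod.fst).length := by omega
          have hmi : mid[i] = l[(k : ℕ) + 1 + i] := by
            simp only [hmid, List.getElem_drop, List.getElem_take]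
          have := hadj ⟨(k : ℕ) + 1 + i, hple⟩ (by simp; omega) (by simp; omega)
          simp only [List.get_eq_getElem, List.getElem_map] at this
          rw [← hqe, hmi]
          exact this
        have hcommam : (a.2) * (mid.map Prod.snd).prod = (mid.map Prod.snd).prod * a.2 := by
          have : Commute a.2 (mid.map Prod.snd).prod := by
            apply Commute.list_prod_right
            intro x hx
            obtain ⟨q, hq, rfl⟩ := List.mem_map.mp hx
            exact hcomm a.1 q.1 (hmidadj q hq) a.2 (hmem a hamem) q.2
              (hmem q (hmemmid q hq))
          exact this.eq
        set c := φ (a.2 * b.2) with hc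
        have habS : a.2 * b.2 ∈ S a.1 :=
          mul_mem (hmem a hamem) (hab1 ▸ hmem b hbmem)
        set d : A := a.2 * b.2 - c • 1 with hd
        have hdS : d ∈ S a.1 := sub_mem habS (SMulMemClass.smul_mem c (one_mem _))
        have hφd : φ d = 0 := by
          rw [hd, map_sub, map_smul, hφ1]; simp [hc]
        set l₁ : List (V × A) := u ++ mid ++ (a.1, d) :: t with hl₁
        set l₂ : List (V × A) := u ++ mid ++ t with hl₂
        have hkeyA : (l.map Prod.snd).prod
            = (l₁.map Prod.snd).prod + c • (l₂.map Prod.snd).prod := by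
          rw [hlsplit, hl₁, hl₂]
          simp only [List.map_append, List.map_cons, List.prod_append, List.prod_cons]
          set pu := (u.map Prod.snd).prod
          set pm := (mid.map Prod.snd).prod
          set pt := (t.map Prod.snd).prod
          have e2 : d * pt = a.2 * (b.2 * pt) - c • pt := by
            rw [hd, sub_mul, smul_mul_assoc, one_mul, mul_assoc]
          have e1 : a.2 * (pm * (b.2 * pt)) = pm * (a.2 * (b.2 * pt)) := by
            rw [← mul_assoc, hcommam, mul_assoc]
          rw [e1, e2]
          simp only [mul_sub, mul_smul_comm, mul_assoc]
          abel
        have hmem₁ : ∀ p ∈ l₁, p.2 ∈ S p.1 := by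
          intro q hq
          rw [hl₁] at hq
          simp only [List.mem_append, List.mem_cons] at hq
          rcases hq with (hq | hq) | hq | hq
          · exact hmemu q hq
          · exact hmem q (hmemmid q hq)
          · rw [hq]; exact hdS
          · exact hmemt q hq
        have hmem₂ : ∀ p ∈ l₂, p.2 ∈ S p.1 := by
          intro q hq
          rw [hl₂] at hq
          simp only [List.mem_append] at hq
          rcases hq with (hq | hq) | hq
          · exact hmemu q hq
          · exact hmem q (hmemmid q hq)
          · exact hmemt q hq
        have hcent₁ : ∀ p ∈ l₁, φ p.2 = 0 := by
          intro q hq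
          rw [hl₁] at hq
          simp only [List.mem_append, List.mem_cons] at hq
          rcases hq with (hq | hq) | hq | hq
          · exact hcent q (by rw [hlsplit]; simp [hq])
          · exact hcent q (hmemmid q hq)
          · rw [hq]; exact hφd
          · exact hcent q (by rw [hlsplit]; simp [hq])
        have hcent₂ : ∀ p ∈ l₂, φ p.2 = 0 := by
          intro q hq
          rw [hl₂] at hq
          simp only [List.mem_append] at hq
          rcases hq with (hq | hq) | hq
          · exact hcent q (by rw [hlsplit]; simp [hq])
          · exact hcent q (hmemmid q hq)
          · exact hcent q (by rw [hlsplit]; simp [hq])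
        have hcount₁ : l₁.countP (fun p => !decide (φ p.2 = 0)) = 0 :=
          List.countP_eq_zero.mpr (by intro q hq; simp [hcent₁ q hq])
        have hcount₂ : l₂.countP (fun p => !decide (φ p.2 = 0)) = 0 :=
          List.countP_eq_zero.mpr (by intro q hq; simp [hcent₂ q hq])
        have hlenl : l.length = u.length + mid.length + t.length + 2 := by
          rw [hlsplit]; simp; omega
        have hlen₁ : l₁.length + l₁.countP (fun p => !decide (φ p.2 = 0)) ≤ m := by
          rw [hcount₁, hl₁]
          simp only [List.length_append, List.length_cons]
          omega
        have hlen₂ : l₂.length + l₂.countP (fun p => !decide (φ p.2 = 0)) ≤ m := by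
          rw [hcount₂, hl₂]
          simp only [List.length_append]
          omega
        have IH₁ := IH l₁ hlen₁ hmem₁
        have IH₂ := IH l₂ hlen₂ hmem₂
        rw [hkeyA, map_add, map_add, map_smul, map_smul, IH₁, IH₂]
    · -- some letter is not centered
      push_neg at hcent
      obtain ⟨p, hp, hpne⟩ := hcent
      obtain ⟨u, t, rfl⟩ := List.append_of_mem hp
      set c := φ p.2 with hc
      set d : A := p.2 - c • 1 with hd
      have hdS : d ∈ S p.1 :=
        sub_mem (hmem p (by simp)) (SMulMemClass.smul_mem c (one_mem _))
      have hφd : φ d = 0 := by rw [hd, map_sub, map_smul, hφ1]; simp [hc]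
      set l₁ : List (V × A) := u ++ (p.1, d) :: t with hl₁
      set l₂ : List (V × A) := u ++ t with hl₂
      have hkeyA : ((u ++ p :: t).map Prod.snd).prod
          = (l₁.map Prod.snd).prod + c • (l₂.map Prod.snd).prod := by
        rw [hl₁, hl₂]
        simp only [List.map_append, List.map_cons, List.prod_append, List.prod_cons]
        set pu := (u.map Prod.snd).prod
        set pt := (t.map Prod.snd).prod
        have e2 : d * pt = p.2 * pt - c • pt := by
          rw [hd, sub_mul, smul_mul_assoc, one_mul]
        rw [e2, mul_sub, mul_smul_comm]
        abel
      have hmem₁ : ∀ q ∈ l₁, q.2 ∈ S q.1 := by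
        intro q hq
        rw [hl₁] at hq
        simp only [List.mem_append, List.mem_cons] at hq
        rcases hq with hq | hq | hq
        · exact hmem q (by simp [hq])
        · rw [hq]; exact hdS
        · exact hmem q (by simp [hq])
      have hmem₂ : ∀ q ∈ l₂, q.2 ∈ S q.1 := by
        intro q hq
        rw [hl₂] at hq
        simp only [List.mem_append] at hq
        rcases hq with hq | hq
        · exact hmem q (by simp [hq])
        · exact hmem q (by simp [hq])
      have hcnt : ((u ++ p :: t).countP (fun q => !decide (φ q.2 = 0)))
          = u.countP (fun q => !decide (φ q.2 = 0))
            + t.countP (fun q => !decide (φ q.2 = 0)) + 1 := by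
        rw [List.countP_append, List.countP_cons_of_pos (a := p) (l := t) (by simpa [hc] using hpne)]
        omega
      have hcnt₁ : l₁.countP (fun q => !decide (φ q.2 = 0))
          = u.countP (fun q => !decide (φ q.2 = 0))
            + t.countP (fun q => !decide (φ q.2 = 0)) := by
        rw [hl₁, List.countP_append, List.countP_cons_of_neg (a := (p.1, d)) (l := t) (by simp [hφd])]
      have hcnt₂ : l₂.countP (fun q => !decide (φ q.2 = 0))
          ≤ u.countP (fun q => !decide (φ q.2 = 0))
            + t.countP (fun q => !decide (φ q.2 = 0)) := by
        rw [hl₂, List.countP_append]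
      have hlenu : (u ++ p :: t).length = u.length + t.length + 1 := by
        simp; omega
      have hlen₁ : l₁.length + l₁.countP (fun q => !decide (φ q.2 = 0)) ≤ m := by
        rw [hcnt₁, hl₁]
        simp only [List.length_append, List.length_cons]
        rw [hcnt, hlenu] at hlen
        omega
      have hlen₂ : l₂.length + l₂.countP (fun q => !decide (φ q.2 = 0)) ≤ m := by
        have : l₂.length = u.length + t.length := by rw [hl₂]; simp
        rw [hcnt, hlenu] at hlen
        omega
      have IH₁ := IH l₁ hlen₁ hmem₁
      have IH₂ := IH l₂ hlen₂ hmem₂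
      rw [hkeyA, map_add, map_add, map_smul, map_smul, IH₁, IH₂]


theorem pair_list {V : Type*} {A : Type*} [CStarAlgebra A] (S : V → StarSubalgebra ℂ A) :
    ∀ L : List A, (∀ y ∈ L, y ∈ ⋃ v, (S v : Set A)) →
      ∃ l : List (V × A), l.map Prod.snd = L ∧ ∀ p ∈ l, p.2 ∈ S p.1 := by
  intro L
  induction L with
  | nil => exact fun _ => ⟨[], rfl, by simp⟩
  | cons y L ih =>
    intro h
    obtain ⟨l, hl, hmem⟩ := ih fun z hz => h z (by simp [hz])
    obtain ⟨v, hv⟩ := Set.mem_iUnion.mp (h y (by simp))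
    refine ⟨(v, y) :: l, by simp [hl], ?_⟩
    intro p hp
    rcases List.mem_cons.mp hp with rfl | hp
    · exact hv
    · exact hmem p hp


/-- **Uniqueness of the graph-independent joint distribution**: if `{S v}` is a
`Γ`-independent family of unital C*-subalgebras with respect to each of the
states `φ` and `ψ`, and `φ` and `ψ` agree on every `S v`, then they agree on
the C*-algebra generated by all the `S v`.  In particular `φ` restricted to the
generated C*-algebra is uniquely determined by its restrictions to the `S v`. -/
theorem gammaIndep_state_unique
    {V : Type*} (G : SimpleGraph V) {A : Type*} [CStarAlgebra A]
    (S : V → StarSubalgebra ℂ A) (hSclosed : ∀ v, IsClosed (S v : Set A))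
    (φ ψ : A →L[ℂ] ℂ)
    (hφ1 : φ 1 = 1) (hφpos : ∀ a : A, 0 ≤ φ (star a * a))
    (hψ1 : ψ 1 = 1) (hψpos : ∀ a : A, 0 ≤ ψ (star a * a))
    (hφind : GammaIndep G (φ : A → ℂ) S) (hψind : GammaIndep G (ψ : A → ℂ) S)
    (hagree : ∀ v, ∀ a ∈ S v, φ a = ψ a) :
    ∀ b ∈ (StarAlgebra.adjoin ℂ (⋃ v, (S v : Set A))).topologicalClosure,
      φ b = ψ b := by
  intro b hb
  have hclosed : IsClosed {x : A | φ x = ψ x} := isClosed_eq φ.continuous ψ.continuous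
  have hsub : (StarAlgebra.adjoin ℂ (⋃ v, (S v : Set A)) : Set A) ⊆ {x : A | φ x = ψ x} := by
    intro x hx
    have hstar : (⋃ v, (S v : Set A)) ∪ star (⋃ v, (S v : Set A)) = ⋃ v, (S v : Set A) := by
      apply Set.union_eq_self_of_subset_right
      intro y hy
      rw [Set.mem_star] at hy
      obtain ⟨v, hv⟩ := Set.mem_iUnion.mp hy
      have h1 : star y ∈ S v := hv
      have h2 : y ∈ S v := by simpa using star_mem h1
      exact Set.mem_iUnion.mpr ⟨v, h2⟩
    have hx' : x ∈ Algebra.adjoin ℂ (⋃ v, (S v : Set A)) := by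
      have : x ∈ (StarAlgebra.adjoin ℂ (⋃ v, (S v : Set A))).toSubalgebra := hx
      rwa [StarAlgebra.adjoin_toSubalgebra, hstar] at this
    have hx'' : x ∈ Submodule.span ℂ ((Submonoid.closure (⋃ v, (S v : Set A)) : Submonoid A) : Set A) := by
      rw [← Algebra.adjoin_eq_span]
      exact hx'
    simp only [Set.mem_setOf_eq]
    clear hx hx'
    induction hx'' using Submodule.span_induction with
    | mem y hy =>
      obtain ⟨L, hL, rfl⟩ := Submonoid.exists_list_of_mem_closure hy
      obtain ⟨l, hl, hmem⟩ := pair_list S L hL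
      rw [← hl]
      exact key_moment_eq G S φ ψ hφ1 hψ1 hφind.1 hφind.2 hψind.2 hagree _ l le_rfl hmem
    | zero => simp
    | add y z _ _ hy hz => rw [map_add, map_add, hy, hz]
    | smul a y _ hy => rw [map_smul, map_smul, hy]
  exact hclosed.closure_subset_iff.mpr hsub hb
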